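/- Let H ∈ ℝ^{m×n} be the incidence matrix of an oriented graph, H̄ = H ⊗ I_d, and let p ∈ ℝ^{dn} be a configuration whose edge vectors e_k = (H̄p)_k are all nonzero, with bearings g_k = e_k/‖e_k‖ and bearing Laplacian L_B = H̄ᵀ blkdiag(π_{g_1},…,π_{g_m}) H̄. If rank(L_B) = dn − d − 1, then the null space of L_B equals the span of the columns of U = 1_n ⊗ I_d together with the vector p, i.e., Null(L_B) = Span{U, p}. -/

import Mathlib

open MeasureTheory Matrix
open scoped Kronecker

/-- The projection operator `π_y = I_d - y yᵀ`. -/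
noncomputable def proj {d : ℕ} (y : Fin d → ℝ) : Matrix (Fin d) (Fin d) ℝ :=
  1 - Matrix.vecMulVec y y

/-- `H` is the incidence matrix of an oriented graph. -/
def IsIncidence {m n : ℕ} (H : Matrix (Fin m) (Fin n) ℝ) : Prop :=
  ∃ head tail : Fin m → Fin n, (∀ k, head k ≠ tail k) ∧
    ∀ k i, H k i = if i = head k then 1 else if i = tail k then -1 else 0

/-- `H̄ = H ⊗ I_d`. -/
noncomputable def Hbar {m n : ℕ} (d : ℕ) (H : Matrix (Fin m) (Fin n) ℝ) :
    Matrix (Fin m × Fin d) (Fin n × Fin d) ℝ :=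
  H ⊗ₖ (1 : Matrix (Fin d) (Fin d) ℝ)

/-- `Π = blkdiag(π_{g_1}, …, π_{g_m})`. -/
noncomputable def blkProj {m d : ℕ} (g : Fin m → Fin d → ℝ) :
    Matrix (Fin m × Fin d) (Fin m × Fin d) ℝ :=
  Matrix.of fun p q => if p.1 = q.1 then proj (g p.1) p.2 q.2 else 0

/-- Euclidean norm of a vector in `ℝ^d` given as `Fin d → ℝ`. -/
noncomputable def enorm {d : ℕ} (v : Fin d → ℝ) : ℝ := Real.sqrt (v ⬝ᵥ v)

/-- The bearing (unit vector) of a nonzero vector. -/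
noncomputable def bearingOf {d : ℕ} (v : Fin d → ℝ) : Fin d → ℝ := (_root_.enorm v)⁻¹ • v

/-- The `k`-th edge vector `e_k = (H̄ p)_k ∈ ℝ^d` of a configuration `p`. -/
noncomputable def edgeVec {m n d : ℕ} (H : Matrix (Fin m) (Fin n) ℝ)
    (p : Fin n × Fin d → ℝ) (k : Fin m) : Fin d → ℝ :=
  fun i => (Hbar d H).mulVec p (k, i)

/-- The bearing Laplacian `L_B = H̄ᵀ Π H̄` of a configuration `p`. -/
noncomputable def LB {m n : ℕ} {d : ℕ} (H : Matrix (Fin m) (Fin n) ℝ)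
    (p : Fin n × Fin d → ℝ) : Matrix (Fin n × Fin d) (Fin n × Fin d) ℝ :=
  (Hbar d H)ᵀ * blkProj (fun k => bearingOf (edgeVec H p k)) * Hbar d H

/-- `U = 1_n ⊗ I_d`. -/
noncomputable def Umat (n d : ℕ) : Matrix (Fin n × Fin d) (Fin d) ℝ :=
  Matrix.of fun p j => if p.2 = j then 1 else 0


lemma hbar_mulVec {m n d : ℕ} (H : Matrix (Fin m) (Fin n) ℝ)
    (x : Fin n × Fin d → ℝ) (k : Fin m) (i : Fin d) :
    (Hbar d H).mulVec x (k, i) = ∑ j : Fin n, H k j * x (j, i) := by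
  rw [Matrix.mulVec, dotProduct, Fintype.sum_prod_type]
  refine Finset.sum_congr rfl fun j _ => ?_
  rw [Finset.sum_eq_single i]
  · simp [Hbar, Matrix.kroneckerMap_apply]
  · intro l _ hl
    simp [Hbar, Matrix.kroneckerMap_apply, Matrix.one_apply, Ne.symm hl]
  · simp

lemma rowsum {m n : ℕ} {H : Matrix (Fin m) (Fin n) ℝ} (hH : IsIncidence H) (k : Fin m) :
    ∑ j : Fin n, H k j = 0 := by
  obtain ⟨hd, tl, hne, hval⟩ := hH
  have : ∀ j : Fin n, H k j =
      (if j = hd k then (1:ℝ) else 0) + (if j = tl k then (-1:ℝ) else 0) := by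
    intro j
    rw [hval]
    by_cases h1 : j = hd k
    · subst h1; simp [(hne k)]
    · simp [h1]
  simp_rw [this, Finset.sum_add_distrib, Finset.sum_ite_eq', Finset.mem_univ]
  norm_num

lemma umat_mulVec {n d : ℕ} (c : Fin d → ℝ) (q : Fin n × Fin d) :
    (Umat n d).mulVec c q = c q.2 := by
  rw [Matrix.mulVec, dotProduct]
  rw [Finset.sum_eq_single q.2] <;> simp [Umat]
  intro l hl; simp [Ne.symm hl]

lemma lb_mulVec_U {m n d : ℕ} {H : Matrix (Fin m) (Fin n) ℝ} (hH : IsIncidence H)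
    (p : Fin n × Fin d → ℝ) (c : Fin d → ℝ) :
    (LB H p).mulVec ((Umat n d).mulVec c) = 0 := by
  have h0 : (Hbar d H).mulVec ((Umat n d).mulVec c) = 0 := by
    funext q
    obtain ⟨k, i⟩ := q
    rw [hbar_mulVec]
    simp_rw [umat_mulVec]
    simp [← Finset.sum_mul, rowsum hH k]
  rw [LB, ← Matrix.mulVec_mulVec, ← Matrix.mulVec_mulVec, h0]
  simp

lemma proj_self {d : ℕ} {e : Fin d → ℝ} (he : e ≠ 0) :
    (proj (bearingOf e)).mulVec e = 0 := by
  have hpos : 0 < e ⬝ᵥ e := by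
    have : e ⬝ᵥ e ≠ 0 := by
      intro h
      exact he (by
        funext i
        have := dotProduct_self_eq_zero.mp h
        exact congrFun this i)
    have hnn : 0 ≤ e ⬝ᵥ e :=
      Finset.sum_nonneg fun i _ => mul_self_nonneg (e i)
    exact lt_of_le_of_ne hnn (Ne.symm this)
  have hs : _root_.enorm e = Real.sqrt (e ⬝ᵥ e) := rfl
  have hspos : 0 < _root_.enorm e := Real.sqrt_pos.mpr hpos
  have hsq : _root_.enorm e * _root_.enorm e = e ⬝ᵥ e := Real.mul_self_sqrt hpos.le
  funext i
  rw [proj, Matrix.sub_mulVec, Matrix.one_mulVec]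
  have hv : (Matrix.vecMulVec (bearingOf e) (bearingOf e)).mulVec e i
      = bearingOf e i * (bearingOf e ⬝ᵥ e) := by
    simp [Matrix.vecMulVec_apply, Matrix.mulVec, dotProduct,
      Finset.mul_sum, mul_assoc]
  have hdot : bearingOf e ⬝ᵥ e = _root_.enorm e := by
    rw [bearingOf, smul_dotProduct, smul_eq_mul, ← hsq]
    field_simp
  rw [Pi.zero_apply, Pi.sub_apply, hv, hdot, bearingOf]
  simp only [Pi.smul_apply, smul_eq_mul]
  field_simp
  simp

lemma blkProj_mulVec {m d : ℕ} (g : Fin m → Fin d → ℝ) (v : Fin m × Fin d → ℝ)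
    (k : Fin m) (i : Fin d) :
    (blkProj g).mulVec v (k, i) = (proj (g k)).mulVec (fun j => v (k, j)) i := by
  rw [Matrix.mulVec, dotProduct, Fintype.sum_prod_type, Matrix.mulVec, dotProduct]
  rw [Finset.sum_eq_single k]
  · simp [blkProj]
  · intro l _ hl
    simp [blkProj, Ne.symm hl]
  · simp

lemma lb_mulVec_p {m n d : ℕ} (H : Matrix (Fin m) (Fin n) ℝ)
    (p : Fin n × Fin d → ℝ) (hnz : ∀ k : Fin m, edgeVec H p k ≠ 0) :
    (LB H p).mulVec p = 0 := by
  have h0 : (blkProj (fun k => bearingOf (edgeVec H p k))).mulVec ((Hbar d H).mulVec p) = 0 := by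
    funext q
    obtain ⟨k, i⟩ := q
    rw [blkProj_mulVec]
    have : (fun j => (Hbar d H).mulVec p (k, j)) = edgeVec H p k := rfl
    rw [this, proj_self (hnz k)]
    rfl
  rw [LB, ← Matrix.mulVec_mulVec, ← Matrix.mulVec_mulVec, h0]
  simp

lemma edge_formula {m n d : ℕ} (H : Matrix (Fin m) (Fin n) ℝ)
    (p : Fin n × Fin d → ℝ) (k : Fin m) (i : Fin d) :
    edgeVec H p k i = ∑ j : Fin n, H k j * p (j, i) := hbar_mulVec H p k i

/-- if `rank L_B = dn - d - 1` then the null space of `L_B` is exactly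
`Span{U, p}`. -/
theorem statement_5 {d m n : ℕ} (hd : 2 ≤ d)
    (H : Matrix (Fin m) (Fin n) ℝ) (hH : IsIncidence H)
    (p : Fin n × Fin d → ℝ)
    (hnz : ∀ k : Fin m, edgeVec H p k ≠ 0)
    (hrank : (LB H p).rank = d * n - d - 1) :
    ∀ x : Fin n × Fin d → ℝ,
      (LB H p).mulVec x = 0 ↔ ∃ c : Fin d → ℝ, ∃ a : ℝ, x = (Umat n d).mulVec c + a • p := by
  intro x
  constructor
  · intro hx
    by_cases hn1 : n ≤ 1
    · -- degenerate small cases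
      by_cases h0 : n = 0
      · exact ⟨0, 0, funext fun q => ((by omega : ¬ q.1.1 < n) q.1.isLt).elim⟩
      · -- n = 1
        have hn : n = 1 := by omega
        refine ⟨fun i => x (⟨0, by omega⟩, i), 0, funext fun q => ?_⟩
        have hq : q.1 = ⟨0, by omega⟩ := by
          ext
          omega
        rw [Pi.add_apply, umat_mulVec]
        simp only [zero_smul, Pi.zero_apply, add_zero]
        rw [← hq]
    · -- main case : n ≥ 2
      have hn : 2 ≤ n := by omega
      have hdn : d + 2 ≤ d * n := by
        calc d + 2 ≤ d + d := by omega
        _ = d * 2 := by ring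
        _ ≤ d * n := Nat.mul_le_mul_left d hn
      have hm : 0 < m := by
        by_contra hm0
        have hm0 : m = 0 := by omega
        subst hm0
        have hLB : LB H p = 0 := by
          ext q r
          simp [LB, Matrix.mul_apply, Fintype.sum_prod_type]
        rw [hLB, Matrix.rank_zero] at hrank
        omega
      -- the span map
      set L : ((Fin d → ℝ) × ℝ) →ₗ[ℝ] (Fin n × Fin d → ℝ) :=
        ((Umat n d).mulVecLin.comp (LinearMap.fst ℝ (Fin d → ℝ) ℝ)) +
          (LinearMap.snd ℝ (Fin d → ℝ) ℝ).smulRight p with hL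
      have hLapp : ∀ c a, L (c, a) = (Umat n d).mulVec c + a • p := fun c a => rfl
      set f := (LB H p).mulVecLin with hf
      have hW : LinearMap.range L ≤ LinearMap.ker f := by
        rintro _ ⟨⟨c, a⟩, rfl⟩
        rw [LinearMap.mem_ker, hLapp, hf, Matrix.mulVecLin_apply,
          Matrix.mulVec_add, Matrix.mulVec_smul, lb_mulVec_U hH, lb_mulVec_p H p hnz]
        simp
      have hinj : Function.Injective L := by
        rw [← LinearMap.ker_eq_bot, Submodule.eq_bot_iff]
        rintro ⟨c, a⟩ hz
        rw [LinearMap.mem_ker, hLapp] at hz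
        have hz' : ∀ j i, c i + a * p (j, i) = 0 := by
          intro j i
          have := congrFun hz (j, i)
          rw [Pi.add_apply, umat_mulVec] at this
          exact this
        by_cases ha : a = 0
        · have hc : c = 0 := by
            funext i
            have := hz' ⟨0, by omega⟩ i
            rw [ha] at this
            simp only [Pi.zero_apply]
            linarith
          simp [hc, ha, Prod.ext_iff]
        · -- p is constant along vertices, edge vectors vanish: contradiction
          exfalso
          apply hnz ⟨0, hm⟩
          funext i
          rw [edge_formula]
          have hp : ∀ j : Fin n, p (j, i) = -c i / a := by
            intro j
            have := hz' j i
            field_simp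
            linarith
          simp_rw [hp]
          rw [← Finset.sum_mul, rowsum hH]
          simp
      have hdom : Module.finrank ℝ ((Fin d → ℝ) × ℝ) = d + 1 := by
        simp [Module.finrank_prod, Module.finrank_fintype_fun_eq_card]
      have hWrank : Module.finrank ℝ (LinearMap.range L) = d + 1 := by
        rw [LinearMap.finrank_range_of_inj hinj, hdom]
      have hKrank : Module.finrank ℝ (LinearMap.ker f) = d + 1 := by
        have hrn := LinearMap.finrank_range_add_finrank_ker f
        have hcodom : Module.finrank ℝ (Fin n × Fin d → ℝ) = n * d := by
          simp [Module.finrank_fintype_fun_eq_card]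
        have hrange : Module.finrank ℝ (LinearMap.range f) = d * n - d - 1 := hrank
        rw [hcodom, hrange] at hrn
        have : n * d = d * n := Nat.mul_comm n d
        omega
      have heq : LinearMap.range L = LinearMap.ker f :=
        Submodule.eq_of_le_of_finrank_le hW (by rw [hWrank, hKrank])
      have hxk : x ∈ LinearMap.ker f := by
        rw [LinearMap.mem_ker, hf, Matrix.mulVecLin_apply, hx]
      rw [← heq] at hxk
      obtain ⟨⟨c, a⟩, hca⟩ := hxk
      exact ⟨c, a, by rw [← hca, hLapp]⟩
  · rintro ⟨c, a, rfl⟩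
    rw [Matrix.mulVec_add, Matrix.mulVec_smul, lb_mulVec_U hH, lb_mulVec_p H p hnz]
    simp
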